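/- arXiv:2504.16602 — 2 statements merged into one kernel-verified Lean document; each statement's English description precedes it below -/
import Mathlib

section
/- In the category of bounded distributive lattices, a morphism f : X → Y is an extremal epimorphism if and only if the underlying map of f is surjective. -/
open CategoryTheory

/-- A morphism `f` in a category is an extremal epimorphism if whenever `f = h ≫ g`
with `g` a monomorphism, then `g` is an isomorphism. -/
def IsExtremalEpi {C : Type*} [Category C] {X Y : C} (f : X ⟶ Y) : Prop :=
  ∀ ⦃Z : C⦄ (g : Z ⟶ Y) (h : X ⟶ Z), f = h ≫ g → Mono g → IsIso g

universe u

namespace BddDistLatExtremal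

/-- Underlying function of a `BddDistLat` morphism. -/
def ap {A B : BddDistLat.{u}} (k : A ⟶ B) : A → B :=
  (show BoundedLatticeHom A B from k.hom)

theorem hom_ext {A B : BddDistLat.{u}} {k l : A ⟶ B} (h : ∀ x, ap k x = ap l x) : k = l :=
  BddDistLat.hom_ext (DFunLike.ext (show BoundedLatticeHom A B from k.hom) (show BoundedLatticeHom A B from l.hom) h)

theorem ap_comp {A B C : BddDistLat.{u}} (k : A ⟶ B) (l : B ⟶ C) (x : A) :
    ap (k ≫ l) x = ap l (ap k x) := rfl

theorem ap_congr {A B : BddDistLat.{u}} {k l : A ⟶ B} (h : k = l) (x : A) :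
    ap k x = ap l x := by rw [h]

abbrev Three : Type u := WithBot (WithTop PUnit.{u+1})

def pt {Z : Type*} [Lattice Z] [BoundedOrder Z] (a : Z) : Three → Z
  | none => ⊥
  | some none => ⊤
  | some (some _) => a

theorem pt_mono {Z : Type*} [Lattice Z] [BoundedOrder Z] (a : Z) : Monotone (pt a) := by
  rintro (_ | _ | _) (_ | _ | _) h <;>
    simp only [pt] <;>
    first
      | rfl
      | exact le_top
      | exact bot_le
      | exact le_rfl
      | exact absurd h (not_le.2 (WithBot.bot_lt_coe _))
      | exact absurd (WithBot.coe_le_coe.1 h) (WithTop.not_top_le_coe _)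

def ptHom {Z : Type u} [DistribLattice Z] [BoundedOrder Z] (a : Z) :
    BoundedLatticeHom Three Z where
  toFun := pt a
  map_sup' x y := (pt_mono a).map_sup x y
  map_inf' x y := (pt_mono a).map_inf x y
  map_top' := rfl
  map_bot' := rfl

theorem injective_of_mono {Z Y : BddDistLat.{u}} (g : Z ⟶ Y) (hg : Mono g) :
    Function.Injective (ap g) := by
  intro a b hab
  let h1 : BddDistLat.of Three ⟶ Z := BddDistLat.ofHom (show BoundedLatticeHom Three Z from ptHom (Z := ↥Z) a)
  let h2 : BddDistLat.of Three ⟶ Z := BddDistLat.ofHom (show BoundedLatticeHom Three Z from ptHom (Z := ↥Z) b)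
  have heq : h1 ≫ g = h2 ≫ g := by
    apply hom_ext
    rintro (_ | _ | _)
    · show ap g ⊥ = ap g ⊥
      rfl
    · show ap g ⊤ = ap g ⊤
      rfl
    · exact hab
  have h12 := hg.right_cancellation h1 h2 heq
  exact ap_congr h12 (some (some PUnit.unit))

theorem isIso_of_bijective {Z Y : BddDistLat.{u}} (g : Z ⟶ Y)
    (hbij : Function.Bijective (ap g)) : IsIso g := by
  let e : Z ≃ Y := Equiv.ofBijective (ap g) hbij
  have hsym : ∀ y : Y, ap g (e.symm y) = y := fun y => e.apply_symm_apply y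
  let gi : BoundedLatticeHom Y Z :=
    { toFun := e.symm
      map_sup' := fun x y => hbij.injective <| by
        show ap g (e.symm (x ⊔ y)) = ap g (e.symm x ⊔ e.symm y)
        rw [hsym]
        rw [show ap g (e.symm x ⊔ e.symm y)
            = ap g (e.symm x) ⊔ ap g (e.symm y) from
          map_sup (show BoundedLatticeHom Z Y from g.hom) _ _, hsym, hsym]
      map_inf' := fun x y => hbij.injective <| by
        show ap g (e.symm (x ⊓ y)) = ap g (e.symm x ⊓ e.symm y)
        rw [hsym]
        rw [show ap g (e.symm x ⊓ e.symm y)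
            = ap g (e.symm x) ⊓ ap g (e.symm y) from
          map_inf (show BoundedLatticeHom Z Y from g.hom) _ _, hsym, hsym]
      map_top' := hbij.injective <| by
        show ap g (e.symm ⊤) = ap g ⊤
        rw [hsym, show ap g ⊤ = ⊤ from map_top (show BoundedLatticeHom Z Y from g.hom)]
      map_bot' := hbij.injective <| by
        show ap g (e.symm ⊥) = ap g ⊥
        rw [hsym, show ap g ⊥ = ⊥ from map_bot (show BoundedLatticeHom Z Y from g.hom)] }
  refine ⟨BddDistLat.ofHom (show BoundedLatticeHom Y Z from gi), hom_ext fun z => ?_, hom_ext fun y => ?_⟩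
  · show e.symm (ap g z) = z
    exact e.symm_apply_apply z
  · show ap g (e.symm y) = y
    exact hsym y

end BddDistLatExtremal

open BddDistLatExtremal in
theorem bddDistLat_extremalEpi_iff_surjective' {X Y : BddDistLat} (f : X ⟶ Y) :
    (∀ ⦃Z : BddDistLat⦄ (g : Z ⟶ Y) (h : X ⟶ Z), f = h ≫ g → Mono g → IsIso g)
      ↔ Function.Surjective (show BoundedLatticeHom X Y from f.hom) := by
  have : Function.Surjective (show BoundedLatticeHom X Y from f.hom) ↔
      Function.Surjective (ap f) := Iff.rfl
  rw [this]
  constructor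
  · intro hext
    let f' : BoundedLatticeHom X Y := f.hom
    let L : Sublattice Y :=
      { carrier := Set.range (ap f)
        supClosed' := by rintro _ ⟨a, rfl⟩ _ ⟨b, rfl⟩; exact ⟨a ⊔ b, map_sup f' a b⟩
        infClosed' := by rintro _ ⟨a, rfl⟩ _ ⟨b, rfl⟩; exact ⟨a ⊓ b, map_inf f' a b⟩ }
    letI : BoundedOrder L :=
      { top := ⟨⊤, ⟨⊤, map_top f'⟩⟩
        le_top := fun x => show (x : Y) ≤ ⊤ from le_top
        bot := ⟨⊥, ⟨⊥, map_bot f'⟩⟩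
        bot_le := fun x => show ⊥ ≤ (x : Y) from bot_le }
    let Zo : BddDistLat := BddDistLat.of L
    let g : Zo ⟶ Y :=
      BddDistLat.ofHom (show BoundedLatticeHom L Y from
        { L.subtype with map_top' := rfl, map_bot' := rfl })
    let h : X ⟶ Zo :=
      BddDistLat.ofHom (show BoundedLatticeHom X L from
        { toFun := fun x => ⟨ap f x, ⟨x, rfl⟩⟩
          map_sup' := fun a b => Subtype.ext (map_sup f' a b)
          map_inf' := fun a b => Subtype.ext (map_inf f' a b)
          map_top' := Subtype.ext (map_top f')
          map_bot' := Subtype.ext (map_bot f') })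
    have hfac : f = h ≫ g := hom_ext fun x => rfl
    have hmono : Mono g := by
      constructor
      intro W u v huv
      exact hom_ext fun w => Subtype.ext (ap_congr huv w)
    have hiso : IsIso g := hext g h hfac hmono
    intro y
    let z : L := show ↥L from ap (inv g) y
    have hy : (z : Y) = y := ap_congr (IsIso.inv_hom_id g) y
    obtain ⟨x, hx⟩ := z.2
    exact ⟨x, hx.trans hy⟩
  · intro hsurj Z g h hfac hmono
    apply isIso_of_bijective
    refine ⟨injective_of_mono g hmono, fun y => ?_⟩
    obtain ⟨x, hx⟩ := hsurj y
    exact ⟨ap h x, ((ap_congr hfac x).symm.trans hx : ap g (ap h x) = y)⟩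


open BddDistLatExtremal in
/-- In the category of bounded distributive lattices, a morphism is an extremal
epimorphism if and only if its underlying map is surjective. -/
theorem bddDistLat_extremalEpi_iff_surjective {X Y : BddDistLat} (f : X ⟶ Y) :
    IsExtremalEpi f ↔ Function.Surjective (show BoundedLatticeHom X Y from f.hom) :=
  bddDistLat_extremalEpi_iff_surjective' f
end

section
/- Let C be a tensor-triangulated category with coproducts and let T be a class of dualizable objects of C that is closed under retracts and closed under tensoring with dualizable objects. Then Loc_⊗(T)^⊥ = { X ∈ C : T ⊗ X ≅ 0 for every T ∈ T }. In particular, Loc_⊗(T)^⊥ is a localising tensor ideal, so the localising tensor ideal generated by T is smashing. -/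
open CategoryTheory Limits Pretriangulated MonoidalCategory

universe v u

variable (C : Type u) [Category.{v} C] [HasZeroObject C] [Preadditive C]
  [HasShift C ℤ] [∀ n : ℤ, (CategoryTheory.shiftFunctor C n).Additive] [Pretriangulated C]
  [MonoidalCategory C] [SymmetricCategory C] [HasCoproducts.{v} C]

variable {C}

/-- A localising tensor ideal of a tensor-triangulated category with coproducts: a class of
objects closed under isomorphisms, retracts, shifts, cones of morphisms between its objects,
small coproducts, and tensoring with arbitrary objects. -/
structure IsLocalisingTensorIdeal (S : Set C) : Prop where
  iso_closed : ∀ {X Y : C}, (X ≅ Y) → X ∈ S → Y ∈ S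
  retract_closed : ∀ {X Y : C} (i : X ⟶ Y) (r : Y ⟶ X), i ≫ r = 𝟙 X → Y ∈ S → X ∈ S
  shift_closed : ∀ (n : ℤ) {X : C}, X ∈ S → (shiftFunctor C n).obj X ∈ S
  cone_closed : ∀ (T : Triangle C), (T ∈ distTriang C) → T.obj₁ ∈ S → T.obj₂ ∈ S → T.obj₃ ∈ S
  coproduct_closed : ∀ {J : Type v} (f : J → C), (∀ j, f j ∈ S) → (∐ f) ∈ S
  tensor_closed : ∀ (Y : C) {X : C}, X ∈ S → Y ⊗ X ∈ S

/-- The right orthogonal `S^⊥` of a class of objects: all `X` with `Hom(s, X) = 0` for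
every `s ∈ S`. -/
def rightPerp (S : Set C) : Set C := {X | ∀ ⦃Y : C⦄, Y ∈ S → ∀ f : Y ⟶ X, f = 0}

/-- `Loc_⊗(E)`, the smallest localising tensor ideal containing the class `E`. -/
def locTensorIdeal (E : Set C) : Set C := ⋂₀ {S : Set C | IsLocalisingTensorIdeal S ∧ E ⊆ S}

/-- An object of a monoidal category is dualizable if it admits an exact pairing with some
object. -/
def Dualizable (X : C) : Prop := ∃ Y : C, Nonempty (ExactPairing X Y)

section Aux

set_option linter.unusedSectionVars false

private lemma zero_of_iso {A B X : C} (u : A ≅ B) (h : ∀ g : A ⟶ X, g = 0) (f : B ⟶ X) :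
    f = 0 := by
  have h1 := h (u.hom ≫ f)
  calc f = u.inv ≫ (u.hom ≫ f) := by simp
  _ = u.inv ≫ 0 := by rw [h1]
  _ = 0 := comp_zero

private lemma zero_of_retract (F : C ⥤ C) {s s' X : C} (i : s ⟶ s') (r : s' ⟶ s)
    (hir : i ≫ r = 𝟙 s) (h : ∀ g : F.obj s' ⟶ X, g = 0) (f : F.obj s ⟶ X) : f = 0 := by
  have h1 : F.map r ≫ f = 0 := h _
  calc f = F.map (i ≫ r) ≫ f := by rw [hir, F.map_id, Category.id_comp]
  _ = F.map i ≫ (F.map r ≫ f) := by rw [F.map_comp, Category.assoc]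
  _ = 0 := by rw [h1, comp_zero]

private lemma isZero_sigma {J : Type v} (f : J → C) (h : ∀ j, IsZero (f j)) :
    IsZero (∐ f) := by
  rw [IsZero.iff_id_eq_zero]
  apply Sigma.hom_ext
  intro j
  exact (h j).eq_of_src _ _

private lemma map_isZero' (F : C ⥤ C) [F.PreservesZeroMorphisms] {X : C} (h : IsZero X) :
    IsZero (F.obj X) := by
  rw [IsZero.iff_id_eq_zero] at h ⊢
  rw [← F.map_id, h, F.map_zero]

private lemma dual_dualizable {t t' : C} (p : ExactPairing t t') : Dualizable t' := by
  haveI := p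
  exact ⟨t, ⟨BraidedCategory.exactPairing_swap t t'⟩⟩

private lemma dual_mem (T : Set C)
    (hretract : ∀ {X Y : C} (i : X ⟶ Y) (r : Y ⟶ X), i ≫ r = 𝟙 X → Y ∈ T → X ∈ T)
    (htensor : ∀ (Y Z : C), Y ∈ T → Dualizable Z → Y ⊗ Z ∈ T)
    {t t' : C} (p : ExactPairing t t') (ht : t ∈ T) : t' ∈ T := by
  haveI := p
  have hd' : Dualizable t' := dual_dualizable p
  have h2 : (t ⊗ t') ⊗ t' ∈ T := htensor _ t' (htensor t t' ht hd') hd'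
  refine hretract ((ρ_ t').inv ≫ (t' ◁ (η_ t t')) ≫ (β_ t' (t ⊗ t')).hom)
    ((β_ t' (t ⊗ t')).inv ≫ (α_ t' t t').inv ≫ ((ε_ t t') ▷ t') ≫ (λ_ t').hom) ?_ h2
  simp

private lemma subset_locTensorIdeal (E : Set C) : E ⊆ locTensorIdeal E :=
  fun _t ht => Set.mem_sInter.2 fun _S hS => hS.2 ht

private lemma locTensorIdeal_le {E S : Set C} (h : IsLocalisingTensorIdeal S) (hE : E ⊆ S) :
    locTensorIdeal E ⊆ S := fun _x hx => Set.mem_sInter.1 hx S ⟨h, hE⟩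

private lemma locTensorIdeal_isIdeal (E : Set C) :
    IsLocalisingTensorIdeal (locTensorIdeal E) where
  iso_closed e hX := Set.mem_sInter.2 fun S hS =>
    hS.1.iso_closed e (Set.mem_sInter.1 hX S hS)
  retract_closed i r hir hY := Set.mem_sInter.2 fun S hS =>
    hS.1.retract_closed i r hir (Set.mem_sInter.1 hY S hS)
  shift_closed := fun n {X} hX => Set.mem_sInter.2 fun S hS =>
    hS.1.shift_closed n (Set.mem_sInter.1 hX S hS)
  cone_closed Tr hTr h1 h2 := Set.mem_sInter.2 fun S hS =>
    hS.1.cone_closed Tr hTr (Set.mem_sInter.1 h1 S hS) (Set.mem_sInter.1 h2 S hS)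
  coproduct_closed f hf := Set.mem_sInter.2 fun S hS =>
    hS.1.coproduct_closed f (fun j => Set.mem_sInter.1 (hf j) S hS)
  tensor_closed := fun Y {X} hX => Set.mem_sInter.2 fun S hS =>
    hS.1.tensor_closed Y (Set.mem_sInter.1 hX S hS)

variable [∀ X : C, (tensorLeft X).CommShift ℤ] [∀ X : C, (tensorLeft X).IsTriangulated]
  [∀ (X : C) (J : Type v), PreservesColimitsOfShape (Discrete J) (tensorLeft X)]

private lemma whiskerLeft_zero'' (Y : C) {A B : C} : (Y ◁ (0 : A ⟶ B)) = 0 := by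
  have h : (tensorLeft Y).map (0 : A ⟶ B) = 0 := Functor.map_zero _ _ _
  exact h

private lemma isZero_tensor (Y : C) {X : C} (h : IsZero X) : IsZero (Y ⊗ X) :=
  map_isZero' (tensorLeft Y) h

private lemma tensorLeftHomEquiv_zero' {A X t t' : C} [ExactPairing t t'] :
    (tensorLeftHomEquiv A t t' X) 0 = 0 := by
  simp [tensorLeftHomEquiv, whiskerLeft_zero'']

private lemma tensorLeftHomEquiv_symm_zero' {A X t t' : C} [ExactPairing t t'] :
    (tensorLeftHomEquiv A t t' X).symm 0 = 0 := by
  simp [tensorLeftHomEquiv, whiskerLeft_zero'']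

private lemma hom_zero_of_dual {t t' X : C} [ExactPairing t' t] (h : IsZero (t' ⊗ X))
    {A : C} (f : t ⊗ A ⟶ X) : f = 0 := by
  have h1 : (tensorLeftHomEquiv A t' t X) f = 0 := h.eq_of_tgt _ _
  have h2 := congrArg (tensorLeftHomEquiv A t' t X).symm h1
  rwa [Equiv.symm_apply_apply, tensorLeftHomEquiv_symm_zero'] at h2

private lemma hom_into_tensor_zero {t t' X : C} [ExactPairing t t'] {s : C}
    (h : ∀ g : t' ⊗ s ⟶ X, g = 0) (f : s ⟶ t ⊗ X) : f = 0 := by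
  have h1 : (tensorLeftHomEquiv s t t' X).symm f = 0 := h _
  have h2 := congrArg (tensorLeftHomEquiv s t t' X) h1
  rwa [Equiv.apply_symm_apply, tensorLeftHomEquiv_zero'] at h2

private lemma mem_rightPerp_of_tensor_zero
    (T : Set C) (hdual : ∀ t ∈ T, Dualizable t)
    (hretract : ∀ {X Y : C} (i : X ⟶ Y) (r : Y ⟶ X), i ≫ r = 𝟙 X → Y ∈ T → X ∈ T)
    (htensor : ∀ (Y Z : C), Y ∈ T → Dualizable Z → Y ⊗ Z ∈ T)
    {X : C} (hX : ∀ t ∈ T, IsZero (t ⊗ X)) : X ∈ rightPerp (locTensorIdeal T) := by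
  set S : Set C := {s : C | ∀ (Y : C) (n : ℤ) (f : ((Y ⊗ s)⟦n⟧ : C) ⟶ X), f = 0} with hSdef
  have hideal : IsLocalisingTensorIdeal S := by
    constructor
    · intro s s' e hs Y n f
      exact zero_of_iso ((shiftFunctor C n).mapIso ((tensorLeft Y).mapIso e)) (hs Y n) f
    · intro s s' i r hir hs' Y n f
      exact zero_of_retract (tensorLeft Y ⋙ shiftFunctor C n) i r hir (fun g => hs' Y n g) f
    · intro m s hs Y n f
      exact zero_of_iso (((shiftFunctorAdd C m n).app (Y ⊗ s)) ≪≫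
        (shiftFunctor C n).mapIso (((tensorLeft Y).commShiftIso m).app s).symm)
        (hs Y (m + n)) f
    · intro Tr hTr h1 h2 Y n f
      have hTr' := Pretriangulated.Triangle.shift_distinguished _
        ((tensorLeft Y).map_distinguished Tr hTr) n
      obtain ⟨g, hg⟩ := Pretriangulated.Triangle.yoneda_exact₃ _ hTr' f (h2 Y n _)
      have hgz : g = 0 :=
        zero_of_iso ((shiftFunctorAdd C n 1).app (Y ⊗ Tr.obj₁)) (h1 Y (n + 1)) g
      rw [hg, hgz, comp_zero]
      rfl
    · intro J g hg Y n f
      refine zero_of_iso ((PreservesCoproduct.iso (shiftFunctor C n) (fun j => Y ⊗ g j)).symm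
        ≪≫ ((shiftFunctor C n).mapIso (PreservesCoproduct.iso (tensorLeft Y) g)).symm) ?_ f
      intro p
      apply Sigma.hom_ext
      intro j
      rw [comp_zero]
      exact hg j Y n _
    · intro Z s hs Y n f
      exact zero_of_iso ((shiftFunctor C n).mapIso (α_ Y Z s)) (hs (Y ⊗ Z) n) f
  have hTS : T ⊆ S := by
    intro t ht Y n f
    obtain ⟨t', ⟨p⟩⟩ := hdual t ht
    haveI := p
    haveI : ExactPairing t' t := BraidedCategory.exactPairing_swap t t'
    have hz : IsZero (t' ⊗ X) := hX t' (dual_mem T hretract htensor p ht)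
    refine zero_of_iso ((((tensorLeft t).commShiftIso n).app Y) ≪≫
      (shiftFunctor C n).mapIso (β_ t Y)) ?_ f
    intro g
    exact hom_zero_of_dual hz g
  intro s hs f
  have hsS : s ∈ S := locTensorIdeal_le hideal hTS hs
  have e : ((𝟙_ C ⊗ s)⟦(0 : ℤ)⟧ : C) ≅ s :=
    ((shiftFunctorZero C ℤ).app (𝟙_ C ⊗ s)) ≪≫ (λ_ s)
  exact zero_of_iso e (hsS (𝟙_ C) 0) f

end Aux

variable (C)

/-- Let `T` be a class of dualizable objects of a tensor-triangulated category with
coproducts, closed under retracts and under tensoring with dualizable objects.  Then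
`Loc_⊗(T)^⊥ = { X | t ⊗ X ≅ 0 for all t ∈ T }`; in particular `Loc_⊗(T)^⊥` is a localising
tensor ideal, i.e. the localising tensor ideal generated by `T` is smashing. -/
theorem rightPerp_locTensorIdeal_eq_of_dualizable
    [∀ X : C, (tensorLeft X).CommShift ℤ] [∀ X : C, (tensorLeft X).IsTriangulated]
    [∀ (X : C) (J : Type v), PreservesColimitsOfShape (Discrete J) (tensorLeft X)]
    (T : Set C) (hdual : ∀ t ∈ T, Dualizable t)
    (hretract : ∀ {X Y : C} (i : X ⟶ Y) (r : Y ⟶ X), i ≫ r = 𝟙 X → Y ∈ T → X ∈ T)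
    (htensor : ∀ (Y Z : C), Y ∈ T → Dualizable Z → Y ⊗ Z ∈ T) :
    rightPerp (locTensorIdeal T) = {X : C | ∀ t ∈ T, IsZero (t ⊗ X)} ∧
      IsLocalisingTensorIdeal (rightPerp (locTensorIdeal T)) := by
  have key : rightPerp (locTensorIdeal T) = {X : C | ∀ t ∈ T, IsZero (t ⊗ X)} := by
    apply Set.Subset.antisymm
    · intro X hXperp t ht
      have hloc := locTensorIdeal_isIdeal (C := C) T
      have h1 : t ⊗ X ∈ locTensorIdeal T :=
        hloc.iso_closed (β_ X t) (hloc.tensor_closed X (subset_locTensorIdeal T ht))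
      obtain ⟨t', ⟨p⟩⟩ := hdual t ht
      haveI := p
      rw [IsZero.iff_id_eq_zero]
      apply hom_into_tensor_zero (t := t) (t' := t')
      intro g
      exact hXperp (hloc.tensor_closed t' h1) g
    · intro X hX
      exact mem_rightPerp_of_tensor_zero T hdual (fun i r h hY => hretract i r h hY)
        htensor hX
  refine ⟨key, ?_⟩
  rw [key]
  constructor
  · intro X Y e hX t ht
    exact (hX t ht).of_iso ((tensorLeft t).mapIso e.symm)
  · intro X Y i r hir hY t ht
    rw [IsZero.iff_id_eq_zero]
    have hr : (tensorLeft t).map r = 0 := (hY t ht).eq_of_src _ _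
    calc 𝟙 (t ⊗ X) = (tensorLeft t).map (i ≫ r) := by rw [hir]; exact ((tensorLeft t).map_id X).symm
    _ = (tensorLeft t).map i ≫ (tensorLeft t).map r := (tensorLeft t).map_comp _ _
    _ = 0 := by rw [hr, comp_zero]
  · intro n X hX t ht
    exact (map_isZero' (shiftFunctor C n) (hX t ht)).of_iso
      (((tensorLeft t).commShiftIso n).app X)
  · intro Tr hTr h1 h2 t ht
    have hTr' := (tensorLeft t).map_distinguished Tr hTr
    rw [IsZero.iff_id_eq_zero]
    have hm : ((tensorLeft t).mapTriangle.obj Tr).mor₂ ≫ 𝟙 ((tensorLeft t).obj Tr.obj₃) = 0 :=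
      (h2 t ht).eq_of_src _ _
    obtain ⟨g, hg⟩ := Pretriangulated.Triangle.yoneda_exact₃ _ hTr' (𝟙 _) hm
    have hgz : g = 0 := (map_isZero' (shiftFunctor C 1) (h1 t ht)).eq_of_src _ _
    rw [hgz, comp_zero] at hg
    exact hg
  · intro J f hf t ht
    exact (isZero_sigma _ (fun j => hf j t ht)).of_iso
      (PreservesCoproduct.iso (tensorLeft t) f)
  · intro Y X hX t ht
    exact (isZero_tensor Y (hX t ht)).of_iso
      ((α_ t Y X).symm ≪≫ whiskerRightIso (β_ t Y) X ≪≫ α_ Y t X)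
end
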